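/- (Semi-metric geometry with vanishing rotational disclinations.) Let Ω be in addition connected and simply connected, let L be a connection on Ω and g a metric on Ω with lowered curvature R, and suppose the non-metricity has the semi-metric form Q_{kij} = Q_k g_{ij} for a smooth covector field Q_k : Ω → ℝ³. Assume the skew part of R in its last two indices vanishes identically: R_{ijkl} = R_{ijlk} on Ω (i.e. θ = 0). Then the symmetric part of R in its last two indices vanishes identically (R_{ijkl} + R_{ijlk} ≡ 0, i.e. ζ = 0) if and only if there exists a smooth function φ : Ω → ℝ such that Q_k = ∂_k φ on Ω. -/

import Mathlib

noncomputable section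

/-- Points of ℝ³. -/
abbrev E3 := Fin 3 → ℝ

/-- Partial derivative of `f` along the `j`-th coordinate at `x`. -/
def pd (f : E3 → ℝ) (j : Fin 3) (x : E3) : ℝ :=
  fderiv ℝ f x (Pi.single j 1)

/-- A connection coefficient field: `L x i j k = L^i_{jk}(x)`. -/
abbrev Conn := E3 → Fin 3 → Fin 3 → Fin 3 → ℝ

/-- Smoothness of a connection on `Ω`. -/
def ConnSmooth (L : Conn) (Ω : Set E3) : Prop :=
  ∀ i j k, ContDiffOn ℝ (⊤ : ℕ∞) (fun x => L x i j k) Ω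

/-- Torsion of a connection: `torsion L x i j k = T_{jk}^i = (1/2)(L^i_{jk} - L^i_{kj})`. -/
def torsion (L : Conn) (x : E3) (i j k : Fin 3) : ℝ :=
  (L x i j k - L x i k j) / 2

/-- Curvature of a connection: `curv L x p j i q = R_{jiq}^p`. -/
def curv (L : Conn) (x : E3) (p j i q : Fin 3) : ℝ :=
  pd (fun y => L y p i q) j x - pd (fun y => L y p j q) i x
    + ∑ h, (L x h i q * L x p j h - L x h j q * L x p i h)

/-- A metric field. -/
abbrev Metric := E3 → Matrix (Fin 3) (Fin 3) ℝ

/-- `g` is a metric on `Ω`: smooth entries, symmetric and positive definite on `Ω`. -/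
def MetricOn (g : Metric) (Ω : Set E3) : Prop :=
  (∀ i j, ContDiffOn ℝ (⊤ : ℕ∞) (fun x => g x i j) Ω) ∧
  (∀ x ∈ Ω, (g x).IsSymm) ∧ (∀ x ∈ Ω, (g x).PosDef)

/-- Non-metricity of `(L, g)`: `nm L g x k i j = Q_{kij}`. -/
def nm (L : Conn) (g : Metric) (x : E3) (k i j : Fin 3) : ℝ :=
  - pd (fun y => g y i j) k x + ∑ p, (L x p k j * g x i p + L x p k i * g x j p)

/-- Lowered curvature: `lcurv L g x i j k l = R_{ijkl} = g_{lp} R_{ijk}^p`. -/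
def lcurv (L : Conn) (g : Metric) (x : E3) (i j k l : Fin 3) : ℝ :=
  ∑ p, g x l p * curv L x p i j k

open Set Metric
open scoped Interval

variable {Ω : Set E3}

lemma pd_congr {f g : E3 → ℝ} (hΩ : IsOpen Ω) {x : E3} (hx : x ∈ Ω)
    (h : ∀ y ∈ Ω, f y = g y) (j : Fin 3) : pd f j x = pd g j x := by
  unfold pd
  rw [Filter.EventuallyEq.fderiv_eq (by filter_upwards [hΩ.mem_nhds hx] with y hy using h y hy)]

lemma diffAt_of_smOn {f : E3 → ℝ} (hΩ : IsOpen Ω) (hf : ContDiffOn ℝ (⊤ : ℕ∞) f Ω)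
    {x : E3} (hx : x ∈ Ω) : DifferentiableAt ℝ f x :=
  (hf.differentiableOn (by simp)).differentiableAt (hΩ.mem_nhds hx)

lemma smOn_pd {f : E3 → ℝ} (hΩ : IsOpen Ω) (hf : ContDiffOn ℝ (⊤ : ℕ∞) f Ω) (j : Fin 3) :
    ContDiffOn ℝ (⊤ : ℕ∞) (pd f j) Ω := by
  have h1 : ContDiffOn ℝ (⊤ : ℕ∞) (fderiv ℝ f) Ω := hf.fderiv_of_isOpen (m := (⊤:ℕ∞)) hΩ (by exact_mod_cast le_top)
  exact (ContinuousLinearMap.apply ℝ ℝ (Pi.single j (1:ℝ))).contDiff.comp_contDiffOn h1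

lemma pd_add {f g : E3 → ℝ} {x : E3} (hf : DifferentiableAt ℝ f x)
    (hg : DifferentiableAt ℝ g x) (j : Fin 3) :
    pd (fun y => f y + g y) j x = pd f j x + pd g j x := by
  unfold pd; rw [fderiv_fun_add hf hg]; rfl

lemma pd_neg {f : E3 → ℝ} {x : E3} (j : Fin 3) :
    pd (fun y => -f y) j x = - pd f j x := by
  unfold pd; rw [fderiv_fun_neg]; rfl

lemma pd_mul {f g : E3 → ℝ} {x : E3} (hf : DifferentiableAt ℝ f x)
    (hg : DifferentiableAt ℝ g x) (j : Fin 3) :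
    pd (fun y => f y * g y) j x = pd f j x * g x + f x * pd g j x := by
  unfold pd; rw [fderiv_fun_mul hf hg]; simp [ContinuousLinearMap.add_apply]; ring

lemma pd_sum {F : Fin 3 → E3 → ℝ} {x : E3} (h : ∀ p, DifferentiableAt ℝ (F p) x) (j : Fin 3) :
    pd (fun y => ∑ p, F p y) j x = ∑ p, pd (F p) j x := by
  unfold pd; rw [fderiv_fun_sum (fun p _ => h p)]; simp [ContinuousLinearMap.sum_apply]


lemma pd_eval_fderiv {f : E3 → ℝ} {x : E3} (hf' : DifferentiableAt ℝ (fderiv ℝ f) x)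
    (v w : E3) :
    fderiv ℝ (fun y => fderiv ℝ f y v) x w = fderiv ℝ (fderiv ℝ f) x w v := by
  have h : (fun y => fderiv ℝ f y v)
      = (ContinuousLinearMap.apply ℝ ℝ v) ∘ (fderiv ℝ f) := rfl
  rw [h, fderiv_comp x (ContinuousLinearMap.apply ℝ ℝ v).differentiableAt hf']
  simp

lemma pd_comm {f : E3 → ℝ} (hΩ : IsOpen Ω) (hf : ContDiffOn ℝ (⊤ : ℕ∞) f Ω)
    {x : E3} (hx : x ∈ Ω) (i j : Fin 3) :
    pd (pd f i) j x = pd (pd f j) i x := by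
  have hd : ∀ᶠ y in nhds x, HasFDerivAt f (fderiv ℝ f y) y := by
    filter_upwards [hΩ.mem_nhds hx] with y hy
    exact (diffAt_of_smOn hΩ hf hy).hasFDerivAt
  have hf' : DifferentiableAt ℝ (fderiv ℝ f) x :=
    (((hf.fderiv_of_isOpen (m := (⊤:ℕ∞)) hΩ (by exact_mod_cast le_top)).differentiableOn (by simp))).differentiableAt (hΩ.mem_nhds hx)
  have hsymm := second_derivative_symmetric_of_eventually hd hf'.hasFDerivAt
    (Pi.single i 1) (Pi.single j 1)
  unfold pd
  rw [pd_eval_fderiv hf', pd_eval_fderiv hf']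
  exact hsymm.symm


section PartI
variable (L : Conn) (g : Metric) {Ω : Set E3}

lemma nm_deriv (hΩ : IsOpen Ω) (hL : ConnSmooth L Ω)
    (hg : ∀ i j, ContDiffOn ℝ (⊤ : ℕ∞) (fun x => g x i j) Ω)
    {x : E3} (hx : x ∈ Ω) (i j k l : Fin 3) :
    pd (fun y => nm L g y i k l) j x
      = - pd (pd (fun y => g y k l) i) j x
        + ∑ p, (pd (fun y => L y p i l) j x * g x k p + L x p i l * pd (fun y => g y k p) j x
              + (pd (fun y => L y p i k) j x * g x l p + L x p i k * pd (fun y => g y l p) j x)) := by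
  have hdL : ∀ p a b, DifferentiableAt ℝ (fun y => L y p a b) x :=
    fun p a b => diffAt_of_smOn hΩ (hL p a b) hx
  have hdg : ∀ a b, DifferentiableAt ℝ (fun y => g y a b) x :=
    fun a b => diffAt_of_smOn hΩ (hg a b) hx
  have hdpd : DifferentiableAt ℝ (pd (fun y => g y k l) i) x :=
    diffAt_of_smOn hΩ (smOn_pd hΩ (hg k l) i) hx
  have hstep : pd (fun y => nm L g y i k l) j x
      = pd (fun y => - pd (fun z => g z k l) i y) j x
        + pd (fun y => ∑ p, (L y p i l * g y k p + L y p i k * g y l p)) j x := by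
    exact pd_add hdpd.neg
      (DifferentiableAt.fun_sum (fun p _ => ((hdL p i l).mul (hdg k p)).add ((hdL p i k).mul (hdg l p)))) j
  rw [hstep, pd_neg,
    pd_sum (F := fun p y => L y p i l * g y k p + L y p i k * g y l p) (fun p => ((hdL p i l).mul (hdg k p)).add ((hdL p i k).mul (hdg l p))) j]
  congr 1
  apply Finset.sum_congr rfl
  intro p _
  rw [pd_add (f := fun y => L y p i l * g y k p) (g := fun y => L y p i k * g y l p) ((hdL p i l).mul (hdg k p)) ((hdL p i k).mul (hdg l p)),
    pd_mul (hdL p i l) (hdg k p), pd_mul (hdL p i k) (hdg l p)]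

lemma nm_deriv' (hΩ : IsOpen Ω)
    (hg : ∀ i j, ContDiffOn ℝ (⊤ : ℕ∞) (fun x => g x i j) Ω)
    (Qv : E3 → Fin 3 → ℝ) (hQv : ∀ k, ContDiffOn ℝ (⊤ : ℕ∞) (fun x => Qv x k) Ω)
    (hsemi : ∀ x ∈ Ω, ∀ k i j : Fin 3, nm L g x k i j = Qv x k * g x i j)
    {x : E3} (hx : x ∈ Ω) (i j k l : Fin 3) :
    pd (fun y => nm L g y i k l) j x
      = pd (fun y => Qv y i) j x * g x k l + Qv x i * pd (fun y => g y k l) j x := by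
  rw [pd_congr hΩ hx (fun y hy => hsemi y hy i k l) j,
    pd_mul (diffAt_of_smOn hΩ (hQv i) hx) (diffAt_of_smOn hΩ (hg k l) hx)]

lemma E4 (hΩ : IsOpen Ω) (hL : ConnSmooth L Ω)
    (hg : ∀ i j, ContDiffOn ℝ (⊤ : ℕ∞) (fun x => g x i j) Ω)
    (Qv : E3 → Fin 3 → ℝ) (hQv : ∀ k, ContDiffOn ℝ (⊤ : ℕ∞) (fun x => Qv x k) Ω)
    (hsemi : ∀ x ∈ Ω, ∀ k i j : Fin 3, nm L g x k i j = Qv x k * g x i j)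
    {x : E3} (hx : x ∈ Ω) (i j k l : Fin 3) :
    (∑ p, (pd (fun y => L y p i l) j x * g x k p + L x p i l * pd (fun y => g y k p) j x
        + (pd (fun y => L y p i k) j x * g x l p + L x p i k * pd (fun y => g y l p) j x)))
    - (∑ p, (pd (fun y => L y p j l) i x * g x k p + L x p j l * pd (fun y => g y k p) i x
        + (pd (fun y => L y p j k) i x * g x l p + L x p j k * pd (fun y => g y l p) i x)))
    = (pd (fun y => Qv y i) j x - pd (fun y => Qv y j) i x) * g x k l
      + Qv x i * pd (fun y => g y k l) j x - Qv x j * pd (fun y => g y k l) i x := by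
  have h1 := nm_deriv L g hΩ hL hg hx i j k l
  have h2 := nm_deriv L g hΩ hL hg hx j i k l
  have h3 := nm_deriv' L g hΩ hg Qv hQv hsemi hx i j k l
  have h4 := nm_deriv' L g hΩ hg Qv hQv hsemi hx j i k l
  have hcomm := pd_comm hΩ (hg k l) hx i j
  linarith [h1, h2, h3, h4, hcomm]

lemma zeta_eq (hΩ : IsOpen Ω) (hL : ConnSmooth L Ω)
    (hg : ∀ i j, ContDiffOn ℝ (⊤ : ℕ∞) (fun x => g x i j) Ω)
    (Qv : E3 → Fin 3 → ℝ) (hQv : ∀ k, ContDiffOn ℝ (⊤ : ℕ∞) (fun x => Qv x k) Ω)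
    (hsemi : ∀ x ∈ Ω, ∀ k i j : Fin 3, nm L g x k i j = Qv x k * g x i j)
    {x : E3} (hx : x ∈ Ω) (hsym : (g x).IsSymm) (i j k l : Fin 3) :
    lcurv L g x i j k l + lcurv L g x i j l k
      = (pd (fun y => Qv y j) i x - pd (fun y => Qv y i) j x) * g x k l := by
  have e1 : ∀ a b c, pd (fun y => g y b c) a x
      = (∑ p, (L x p a c * g x b p + L x p a b * g x c p)) - Qv x a * g x b c := by
    intro a b c
    have h := hsemi x hx a b c
    simp only [nm] at h
    linarith
  have e4 := E4 L g hΩ hL hg Qv hQv hsemi hx i j k l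
  simp only [e1] at e4
  have hs10 : g x 1 0 = g x 0 1 := hsym.apply 0 1
  have hs20 : g x 2 0 = g x 0 2 := hsym.apply 0 2
  have hs21 : g x 2 1 = g x 1 2 := hsym.apply 1 2
  unfold lcurv curv
  simp only [Fin.sum_univ_three] at e4 ⊢
  simp only [hs10, hs20, hs21] at e4 ⊢
  linear_combination -e4
end PartI

section Poincare

variable (ω : E3 → E3 →L[ℝ] ℝ) (Ω : Set E3)

/-- `φ` is a primitive of the 1-form `ω` on `U`. -/
def IsPrimOn (φ : E3 → ℝ) (U : Set E3) : Prop := ∀ y ∈ U, HasFDerivAt φ (ω y) y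

/-- A good set: open convex subset of `Ω` carrying a primitive. -/
def Good (U : Set E3) : Prop :=
  IsOpen U ∧ Convex ℝ U ∧ U ⊆ Ω ∧ ∃ φ, IsPrimOn ω φ U

/-- `h` develops `ω` along the curve `γ` near parameter `u`. -/
def DevAt (γ : ℝ → E3) (h : ℝ → ℝ) (u : ℝ) : Prop :=
  ∃ U φ δ, Good ω Ω U ∧ IsPrimOn ω φ U ∧ 0 < δ ∧
    ∀ v : ℝ, |v - u| < δ → γ v ∈ U ∧ h v = φ (γ v) + (h u - φ (γ u))

variable {ω Ω}

lemma prim_diff_const {U V : Set E3} {φ ψ : E3 → ℝ}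
    (hUo : IsOpen U) (hUc : Convex ℝ U) (hVo : IsOpen V) (hVc : Convex ℝ V)
    (hφ : IsPrimOn ω φ U) (hψ : IsPrimOn ω ψ V)
    {z w : E3} (hz : z ∈ U ∩ V) (hw : w ∈ U ∩ V) :
    φ z - ψ z = φ w - ψ w := by
  have hopen : IsOpen (U ∩ V) := hUo.inter hVo
  have hder : ∀ y ∈ U ∩ V, HasFDerivAt (fun t => φ t - ψ t) 0 y := fun y hy => by
    have := (hφ y hy.1).sub (hψ y hy.2); simp only [sub_self] at this; exact this
  exact (hUc.inter hVc).is_const_of_fderivWithin_eq_zero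
    (fun y hy => ((hder y hy).differentiableAt).differentiableWithinAt)
    (fun y hy => by
      rw [fderivWithin_of_isOpen hopen hy]
      exact (hder y hy).fderiv) hz hw

/-- An auxiliary locally-constant-implies-constant lemma with clamping to `[a,b]`. -/
lemma locconst_clamp {a b : ℝ} (hab : a ≤ b) (e : ℝ → ℝ)
    (P : ∀ u ∈ Icc a b, ∃ δ > (0:ℝ), ∀ v ∈ Icc a b, ∀ w ∈ Icc a b,
      |v - u| < δ → |w - u| < δ → e v = e w) :
    e a = e b := by
  set c : ℝ → ℝ := fun v => (projIcc a b hab v : ℝ) with hc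
  have hmem : ∀ v, c v ∈ Icc a b := fun v => (projIcc a b hab v).2
  have hid : ∀ v ∈ Icc a b, c v = v := fun v hv => by
    simp only [hc, projIcc_of_mem hab hv]
  have hlip : ∀ v w : ℝ, |c v - c w| ≤ |v - w| := by
    intro v w
    have := (LipschitzWith.projIcc hab).dist_le_mul v w
    simpa [hc, Subtype.dist_eq, Real.dist_eq] using this
  have hloc : ∀ v₀ : ℝ, ∃ δ > (0:ℝ), ∀ v, |v - v₀| < δ → e (c v) = e (c v₀) := by
    intro v₀
    obtain ⟨δ, hδ, hP⟩ := P (c v₀) (hmem v₀)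
    refine ⟨δ, hδ, fun v hv => ?_⟩
    refine hP (c v) (hmem v) (c v₀) (hmem v₀) (lt_of_le_of_lt (hlip v v₀) hv) (by simpa using hδ)
  have hclopen : IsClopen {v : ℝ | e (c v) = e (c a)} := by
    constructor
    · rw [← isOpen_compl_iff]
      rw [Metric.isOpen_iff]
      intro v₀ hv₀
      obtain ⟨δ, hδ, hP⟩ := hloc v₀
      exact ⟨δ, hδ, fun v hv => by
        simp only [mem_compl_iff, mem_setOf_eq] at hv₀ ⊢
        rw [hP v (by simpa [Real.dist_eq] using hv)]; exact hv₀⟩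
    · rw [Metric.isOpen_iff]
      intro v₀ hv₀
      obtain ⟨δ, hδ, hP⟩ := hloc v₀
      exact ⟨δ, hδ, fun v hv => by
        simp only [mem_setOf_eq] at hv₀ ⊢
        rw [hP v (by simpa [Real.dist_eq] using hv)]; exact hv₀⟩
  have : {v : ℝ | e (c v) = e (c a)} = univ := by
    rcases isClopen_iff.mp hclopen with h | h
    · exfalso; have : a ∈ {v : ℝ | e (c v) = e (c a)} := rfl
      rw [h] at this; exact this
    · exact h
  have hb : b ∈ {v : ℝ | e (c v) = e (c a)} := by rw [this]; trivial
  have := hb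
  simp only [mem_setOf_eq, hid a ⟨le_rfl, hab⟩, hid b ⟨hab, le_rfl⟩] at this
  exact this.symm


section Poincare2
variable {ω : E3 → E3 →L[ℝ] ℝ} {Ω : Set E3}

lemma good_open {U : Set E3} (h : Good ω Ω U) : IsOpen U := h.1
lemma good_convex {U : Set E3} (h : Good ω Ω U) : Convex ℝ U := h.2.1

/-- Uniqueness of developments (for curves agreeing on `[0,1]`). -/
lemma dev_unique {γ₁ γ₂ : ℝ → E3} {h₁ h₂ : ℝ → ℝ}
    (H1 : ∀ u ∈ Icc (0:ℝ) 1, DevAt ω Ω γ₁ h₁ u)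
    (H2 : ∀ u ∈ Icc (0:ℝ) 1, DevAt ω Ω γ₂ h₂ u)
    (hagree : ∀ v ∈ Icc (0:ℝ) 1, γ₁ v = γ₂ v) :
    h₁ 1 - h₁ 0 = h₂ 1 - h₂ 0 := by
  have key := locconst_clamp (zero_le_one) (fun v => h₁ v - h₂ v) ?_
  · linarith
  intro u hu
  obtain ⟨U₁, φ₁, δ₁, hG₁, hφ₁, hδ₁, HH₁⟩ := H1 u hu
  obtain ⟨U₂, φ₂, δ₂, hG₂, hφ₂, hδ₂, HH₂⟩ := H2 u hu
  refine ⟨min δ₁ δ₂, lt_min hδ₁ hδ₂, fun v hv w hw hvδ hwδ => ?_⟩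
  have hv1 := HH₁ v (lt_of_lt_of_le hvδ (min_le_left _ _))
  have hv2 := HH₂ v (lt_of_lt_of_le hvδ (min_le_right _ _))
  have hw1 := HH₁ w (lt_of_lt_of_le hwδ (min_le_left _ _))
  have hw2 := HH₂ w (lt_of_lt_of_le hwδ (min_le_right _ _))
  have hav := hagree v hv
  have haw := hagree w hw
  have hconst := prim_diff_const (good_open hG₁) (good_convex hG₁) (good_open hG₂)
    (good_convex hG₂) hφ₁ hφ₂ (z := γ₁ v) ⟨hv1.1, hav ▸ hv2.1⟩
    (w := γ₁ w) ⟨hw1.1, haw ▸ hw2.1⟩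
  have e1 := hv1.2
  have e2 := hw1.2
  rw [hav] at e1
  rw [haw] at e2
  rw [hav, haw] at hconst
  linarith [e1, e2, hv2.2, hw2.2, hconst]

/-- Increment of a development across a piece of the curve contained in one good set. -/
lemma dev_piece {γ : ℝ → E3} {h : ℝ → ℝ}
    (H : ∀ u ∈ Icc (0:ℝ) 1, DevAt ω Ω γ h u)
    {t₁ t₂ : ℝ} (h1 : 0 ≤ t₁) (h12 : t₁ ≤ t₂) (h2 : t₂ ≤ 1)
    {U : Set E3} {φ : E3 → ℝ} (hG : Good ω Ω U) (hφ : IsPrimOn ω φ U)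
    (hin : ∀ v ∈ Icc t₁ t₂, γ v ∈ U) :
    h t₂ - h t₁ = φ (γ t₂) - φ (γ t₁) := by
  have key := locconst_clamp h12 (fun v => h v - φ (γ v)) ?_
  · linarith
  intro u hu
  have hu01 : u ∈ Icc (0:ℝ) 1 := ⟨le_trans h1 hu.1, le_trans hu.2 h2⟩
  obtain ⟨U₀, φ₀, δ₀, hG₀, hφ₀, hδ₀, HH₀⟩ := H u hu01
  refine ⟨δ₀, hδ₀, fun v hv w hw hvδ hwδ => ?_⟩
  have hv0 := HH₀ v hvδ
  have hw0 := HH₀ w hwδ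
  have hconst := prim_diff_const (good_open hG₀) (good_convex hG₀) (good_open hG)
    (good_convex hG) hφ₀ hφ (z := γ v) ⟨hv0.1, hin v hv⟩ (w := γ w) ⟨hw0.1, hin w hw⟩
  rw [hv0.2, hw0.2]
  linarith

end Poincare2

section Poincare3
variable {ω : E3 → E3 →L[ℝ] ℝ} {Ω : Set E3}

/-- Extension step for developments. -/
lemma dev_extend {γ : ℝ → E3} {h : ℝ → ℝ} {T : ℝ} {U : Set E3} {φ : E3 → ℝ}
    {ε₁ ε₂ c : ℝ}
    (hdev : ∀ u ≤ T, DevAt ω Ω γ h u)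
    (hG : Good ω Ω U) (hφ : IsPrimOn ω φ U) (hε₁ : 0 < ε₁) (hε₂ : 0 < ε₂)
    (hin : ∀ v : ℝ, |v - T| < ε₁ → γ v ∈ U)
    (hval : ∀ v : ℝ, T - ε₂ < v → v ≤ T → h v = φ (γ v) + c) :
    ∃ h', ∀ u ≤ T + ε₁/2, DevAt ω Ω γ h' u := by
  classical
  set h' : ℝ → ℝ := fun v => if v ≤ T then h v else φ (γ v) + c with hh'
  have hval' : ∀ v : ℝ, T - min ε₁ ε₂ < v → v < T + ε₁ → h' v = φ (γ v) + c := by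
    intro v hv1 hv2
    by_cases hvT : v ≤ T
    · simp only [hh', if_pos hvT]
      exact hval v (lt_of_le_of_lt (by simp [min_le_right]; linarith [min_le_right ε₁ ε₂]) hv1) hvT
    · simp only [hh', if_neg hvT]
  refine ⟨h', fun u hu => ?_⟩
  by_cases huT : u ≤ T
  · obtain ⟨U₀, φ₀, δ₀, hG₀, hφ₀, hδ₀, H₀⟩ := hdev u huT
    by_cases hsmall : u + δ₀ ≤ T
    · refine ⟨U₀, φ₀, δ₀, hG₀, hφ₀, hδ₀, fun v hv => ?_⟩
      have hvT : v ≤ T := by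
        have := abs_lt.mp hv
        linarith [this.2]
      have := H₀ v hv
      simp only [hh', if_pos hvT, if_pos huT]
      exact this
    · push_neg at hsmall
      have hTu : |T - u| < δ₀ := by
        rw [abs_of_nonneg (by linarith)]; linarith
      set δ : ℝ := min δ₀ ((T - u) + ε₁) with hδdef
      have hδpos : 0 < δ := lt_min hδ₀ (by linarith)
      refine ⟨U₀, φ₀, δ, hG₀, hφ₀, hδpos, fun v hv => ?_⟩
      have hvδ₀ : |v - u| < δ₀ := lt_of_lt_of_le hv (min_le_left _ _)
      have hv0 := H₀ v hvδ₀
      have hu' : h' u = h u := by simp only [hh', if_pos huT]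
      refine ⟨hv0.1, ?_⟩
      by_cases hvT : v ≤ T
      · simp only [hh', if_pos hvT, if_pos huT]
        exact hv0.2
      · push_neg at hvT
        have hvU : γ v ∈ U := by
          apply hin
          have h2 : v - u < (T - u) + ε₁ :=
            lt_of_lt_of_le (abs_lt.mp hv).2 (min_le_right _ _)
          rw [abs_of_nonneg (by linarith)]
          linarith
        have hTU : γ T ∈ U := hin T (by simpa using hε₁)
        have hT0 := H₀ T hTu
        have e₁ : h T = φ₀ (γ T) + (h u - φ₀ (γ u)) := hT0.2
        have e₂ : h T = φ (γ T) + c := hval T (by linarith) le_rfl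
        have e₃ : φ (γ v) - φ₀ (γ v) = φ (γ T) - φ₀ (γ T) :=
          prim_diff_const (good_open hG) (good_convex hG) (good_open hG₀) (good_convex hG₀)
            hφ hφ₀ ⟨hvU, hv0.1⟩ ⟨hTU, hT0.1⟩
        simp only [hh', if_neg (not_le.mpr hvT), if_pos huT]
        linarith
  · push_neg at huT
    set δ : ℝ := min (ε₁/2) (min ε₁ ε₂) with hδdef
    have hδpos : 0 < δ := lt_min (by linarith) (lt_min hε₁ hε₂)
    refine ⟨U, φ, δ, hG, hφ, hδpos, fun v hv => ?_⟩
    have habs := abs_lt.mp hv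
    have hvlow : T - min ε₁ ε₂ < v := by
      have : δ ≤ min ε₁ ε₂ := min_le_right _ _
      linarith [habs.1]
    have hvhigh : v < T + ε₁ := by
      have h1 : δ ≤ ε₁/2 := min_le_left _ _
      linarith [habs.2]
    have hvin : γ v ∈ U := hin v (by
      rw [abs_lt]
      constructor
      · have : δ ≤ min ε₁ ε₂ := min_le_right _ _
        have := min_le_left ε₁ ε₂
        linarith [habs.1]
      · linarith)
    refine ⟨hvin, ?_⟩
    have hu' : h' u = φ (γ u) + c := hval' u (by have := lt_min hε₁ hε₂; linarith) (by linarith)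
    rw [hval' v hvlow hvhigh, hu']
    ring

end Poincare3

section Poincare4
variable {ω : E3 → E3 →L[ℝ] ℝ} {Ω : Set E3}

lemma nhds_ball_mem {γ : ℝ → E3} (hγ : Continuous γ) {U : Set E3} (hU : IsOpen U)
    {s : ℝ} (hmem : γ s ∈ U) : ∃ η > (0:ℝ), ∀ v, |v - s| < η → γ v ∈ U := by
  have h1 : γ ⁻¹' U ∈ nhds s := hγ.continuousAt.preimage_mem_nhds (hU.mem_nhds hmem)
  obtain ⟨η, hη, hball⟩ := Metric.mem_nhds_iff.mp h1
  exact ⟨η, hη, fun v hv => hball (by simpa [Real.dist_eq] using hv)⟩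

lemma dev_exists {γ : ℝ → E3} (hγ : Continuous γ) (hγΩ : ∀ u, γ u ∈ Ω)
    (hc0 : ∀ u ≤ (0:ℝ), γ u = γ 0)
    (hloc : ∀ x ∈ Ω, ∃ U, Good ω Ω U ∧ x ∈ U) :
    ∃ h, ∀ u ≤ (1:ℝ), DevAt ω Ω γ h u := by
  classical
  set A : Set ℝ := {T | ∃ h, ∀ u ≤ T, DevAt ω Ω γ h u} with hA
  have base : (0:ℝ) ∈ A := by
    obtain ⟨U, hGU, hmem⟩ := hloc (γ 0) (hγΩ 0)
    obtain ⟨φ, hφ⟩ := hGU.2.2.2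
    obtain ⟨δ₀, hδ₀, hball⟩ := nhds_ball_mem hγ (good_open hGU) (s := 0) hmem
    refine ⟨fun v => φ (γ v), fun u hu => ⟨U, φ, δ₀, hGU, hφ, hδ₀, fun v hv => ⟨?_, by ring⟩⟩⟩
    rcases le_or_gt v 0 with hv0 | hv0
    · rw [hc0 v hv0]; exact hmem
    · refine hball v ?_
      have := (abs_lt.mp hv).2
      rw [show v - 0 = v by ring, abs_of_pos hv0]
      linarith
  by_contra hcon
  have h1A : (1:ℝ) ∉ A := fun h1 => hcon (by
    obtain ⟨h, hh⟩ := h1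
    exact ⟨h, hh⟩)
  have hAlt : ∀ T ∈ A, T < 1 := by
    intro T hT
    by_contra hge
    push_neg at hge
    obtain ⟨h, hh⟩ := hT
    exact h1A ⟨h, fun u hu => hh u (le_trans hu hge)⟩
  have hbdd : BddAbove A := ⟨1, fun T hT => (hAlt T hT).le⟩
  have hne : A.Nonempty := ⟨0, base⟩
  set s := sSup A with hs
  obtain ⟨U, hGU, hmemU⟩ := hloc (γ s) (hγΩ s)
  obtain ⟨φU, hφU⟩ := hGU.2.2.2
  obtain ⟨η, hη, hball⟩ := nhds_ball_mem hγ (good_open hGU) hmemU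
  obtain ⟨T, hTA, hTlt⟩ := exists_lt_of_lt_csSup hne (show s - η/4 < s by linarith)
  have hTle : T ≤ s := le_csSup hbdd hTA
  obtain ⟨h, hh⟩ := hTA
  obtain ⟨UT, φT, δT, hGT, hφT, hδT, HT⟩ := hh T le_rfl
  have hγTU : γ T ∈ U := hball T (by rw [abs_of_nonpos (by linarith)]; linarith)
  have hγTUT : γ T ∈ UT := (HT T (by simpa using hδT)).1
  set k := φU (γ T) - φT (γ T) with hk
  set c := (h T - φT (γ T)) - k with hc
  have hval : ∀ v : ℝ, T - min δT (η/4) < v → v ≤ T → h v = φU (γ v) + c := by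
    intro v hv1 hv2
    have hvδT : |v - T| < δT := by
      rw [abs_of_nonpos (by linarith)]
      have := min_le_left δT (η/4)
      linarith
    have hvU : γ v ∈ U := by
      apply hball
      have := min_le_right δT (η/4)
      rw [abs_of_nonpos (by linarith)]
      linarith
    have hH := HT v hvδT
    have e := prim_diff_const (good_open hGU) (good_convex hGU) (good_open hGT)
      (good_convex hGT) hφU hφT ⟨hvU, hH.1⟩ ⟨hγTU, hγTUT⟩
    rw [hH.2, hc, hk]
    linarith
  have hin : ∀ v : ℝ, |v - T| < η/2 → γ v ∈ U := by
    intro v hv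
    apply hball
    have h1 := abs_lt.mp hv
    rw [abs_lt]
    constructor <;> linarith
  obtain ⟨h', hh'⟩ := dev_extend (fun u hu => hh u hu) hGU hφU (by linarith : (0:ℝ) < η/2)
    (lt_min hδT (by linarith)) hin hval
  have hTA' : T + η/4 ∈ A := ⟨h', fun u hu => hh' u (by linarith)⟩
  have := le_csSup hbdd hTA'
  linarith

end Poincare4

section Poincare5
variable {ω : E3 → E3 →L[ℝ] ℝ} {Ω : Set E3}

open scoped Classical in
def devVal (ω : E3 → E3 →L[ℝ] ℝ) (Ω : Set E3) (γ : ℝ → E3) : ℝ :=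
  if hex : ∃ h, ∀ u ∈ Icc (0:ℝ) 1, DevAt ω Ω γ h u then hex.choose 1 - hex.choose 0 else 0

lemma devVal_spec {γ : ℝ → E3} {h : ℝ → ℝ} (hh : ∀ u ∈ Icc (0:ℝ) 1, DevAt ω Ω γ h u) :
    devVal ω Ω γ = h 1 - h 0 := by
  have hex : ∃ h, ∀ u ∈ Icc (0:ℝ) 1, DevAt ω Ω γ h u := ⟨h, hh⟩
  rw [devVal, dif_pos hex]
  exact dev_unique hex.choose_spec hh (fun v _ => rfl)

lemma devVal_homotopy {K : ℝ × ℝ → E3} (hK : Continuous K) (hKΩ : ∀ p, K p ∈ Ω)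
    (hloc : ∀ x ∈ Ω, ∃ U, Good ω Ω U ∧ x ∈ U)
    (hclamp : ∀ s t, t ≤ (0:ℝ) → K (s, t) = K (s, 0))
    (hend0 : ∀ s, K (s, 0) = K (0, 0)) (hend1 : ∀ s, K (s, 1) = K (0, 1)) :
    devVal ω Ω (fun t => K (0, t)) = devVal ω Ω (fun t => K (1, t)) := by
  classical
  have hex : ∀ s : ℝ, ∃ h, ∀ u ≤ (1:ℝ), DevAt ω Ω (fun t => K (s, t)) h u := by
    intro s
    exact dev_exists (hK.comp (Continuous.prodMk_right s)) (fun u => hKΩ _)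
      (fun u hu => hclamp s u hu) hloc
  set G : ℝ → ℝ := fun s => devVal ω Ω (fun t => K (s, t)) with hGdef
  have main : ∀ s₀ : ℝ, ∃ ε > (0:ℝ), ∀ s, |s - s₀| < ε → G s = G s₀ := by
    intro s₀
    obtain ⟨h, hh⟩ := hex s₀
    have hdata : ∀ u : Icc (0:ℝ) 1, DevAt ω Ω (fun t => K (s₀, t)) h u :=
      fun u => hh u u.2.2
    choose U φ δ hGd hφd hδd Hd using hdata
    have hcover : Icc (0:ℝ) 1 ⊆ ⋃ u : Icc (0:ℝ) 1, ball (u:ℝ) (δ u) := by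
      intro t ht
      exact mem_iUnion.mpr ⟨⟨t, ht⟩, by simpa using hδd ⟨t, ht⟩⟩
    obtain ⟨ρ, hρ, hleb⟩ := lebesgue_number_lemma_of_metric isCompact_Icc
      (fun u => isOpen_ball) hcover
    obtain ⟨n, hn⟩ := exists_nat_one_div_lt hρ
    set N : ℕ := n + 1 with hNdef
    have hNpos : (0:ℝ) < (N:ℝ) := by positivity
    have hmesh : (1:ℝ)/(N:ℝ) < ρ := by
      rw [hNdef]; push_cast; exact hn
    have hWex : ∀ m : Fin N, ∃ w : Icc (0:ℝ) 1,
        Icc ((m:ℝ)/(N:ℝ)) (((m:ℝ)+1)/(N:ℝ)) ⊆ ball (w:ℝ) (δ w) := by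
      intro m
      have hmem : (m:ℝ)/(N:ℝ) ∈ Icc (0:ℝ) 1 := by
        constructor
        · positivity
        · rw [div_le_one hNpos]
          exact_mod_cast (m.2.le)
      obtain ⟨w, hw⟩ := hleb ((m:ℝ)/(N:ℝ)) hmem
      refine ⟨w, fun t ht => hw ?_⟩
      rw [mem_ball, Real.dist_eq]
      have h2 : ((m:ℝ)+1)/(N:ℝ) - (m:ℝ)/(N:ℝ) = 1/(N:ℝ) := by field_simp; ring
      rw [abs_of_nonneg (by linarith [ht.1])]
      linarith [ht.2]
    choose W hW using hWex
    -- totalized versions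
    have hN0 : (0:ℕ) < N := Nat.succ_pos n
    set W' : ℕ → Icc (0:ℝ) 1 := fun m => if h : m < N then W ⟨m, h⟩ else W ⟨0, hN0⟩ with hW'def
    set ψ : ℕ → E3 → ℝ := fun m => φ (W' m) with hψdef
    set V : ℕ → Set E3 := fun m => U (W' m) with hVdef
    have hGood : ∀ m, Good ω Ω (V m) := fun m => hGd _
    have hprim : ∀ m, IsPrimOn ω (ψ m) (V m) := fun m => hφd _
    have hWsub : ∀ m (hm : m < N),
        Icc ((m:ℝ)/(N:ℝ)) (((m:ℝ)+1)/(N:ℝ)) ⊆ ball ((W' m : ℝ)) (δ (W' m)) := by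
      intro m hm
      rw [hW'def]
      simp only [dif_pos hm]
      exact hW ⟨m, hm⟩
    -- tube lemma for each m
    have htube : ∀ m : ℕ, m < N → ∃ ε > (0:ℝ), ∀ s, |s - s₀| < ε →
        ∀ t ∈ Icc ((m:ℝ)/(N:ℝ)) (((m:ℝ)+1)/(N:ℝ)), K (s, t) ∈ V m := by
      intro m hm
      have hopen : IsOpen (K ⁻¹' (V m)) := (good_open (hGood m)).preimage hK
      have hsub : ({s₀} ×ˢ Icc ((m:ℝ)/(N:ℝ)) (((m:ℝ)+1)/(N:ℝ))) ⊆ K ⁻¹' (V m) := by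
        rintro ⟨a, t⟩ ⟨ha, ht⟩
        simp only [mem_singleton_iff] at ha
        subst ha
        have hb := hWsub m hm ht
        rw [mem_ball, Real.dist_eq] at hb
        exact (Hd (W' m) t hb).1
      obtain ⟨a, b, hao, _, hsa, hsb, hab⟩ :=
        generalized_tube_lemma isCompact_singleton isCompact_Icc hopen hsub
      obtain ⟨ε, hε, hball⟩ := Metric.isOpen_iff.mp hao s₀ (hsa rfl)
      exact ⟨ε, hε, fun s hs t ht => hab ⟨hball (by simpa [Real.dist_eq] using hs), hsb ht⟩⟩
    choose! εm hεm htub using htube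
    obtain ⟨ε₀, hε₀, hε₀le⟩ : ∃ ε₀ > (0:ℝ), ∀ m < N, ε₀ ≤ εm m := by
      refine ⟨(Finset.range N).inf' (Finset.nonempty_range_iff.mpr (by omega)) εm, ?_, ?_⟩
      · rw [gt_iff_lt, Finset.lt_inf'_iff]
        intro m hm
        exact hεm m (Finset.mem_range.mp hm)
      · intro m hm
        exact Finset.inf'_le εm (Finset.mem_range.mpr hm)
    refine ⟨ε₀, hε₀, fun s hs => ?_⟩
    -- value of G σ for σ close to s₀
    have key : ∀ σ : ℝ, |σ - s₀| < ε₀ → G σ =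
        ∑ m ∈ Finset.range N, (ψ m (K (σ, ((m:ℝ)+1)/(N:ℝ))) - ψ m (K (σ, (m:ℝ)/(N:ℝ)))) := by
      intro σ hσ
      obtain ⟨hσf, hhσ⟩ := hex σ
      have hhσ01 : ∀ u ∈ Icc (0:ℝ) 1, DevAt ω Ω (fun t => K (σ, t)) hσf u :=
        fun u hu => hhσ u hu.2
      have hGσ : G σ = hσf 1 - hσf 0 := devVal_spec hhσ01
      have htel : hσf 1 - hσf 0
          = ∑ m ∈ Finset.range N, (hσf (((m:ℝ)+1)/(N:ℝ)) - hσf ((m:ℝ)/(N:ℝ))) := by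
        have := Finset.sum_range_sub (f := fun m => hσf ((m:ℝ)/(N:ℝ))) N
        rw [show ((N:ℝ))/(N:ℝ) = 1 by field_simp, show ((0:ℕ):ℝ)/(N:ℝ) = 0 by simp] at this
        rw [← this]
        apply Finset.sum_congr rfl
        intro m _
        push_cast
        ring_nf
      rw [hGσ, htel]
      apply Finset.sum_congr rfl
      intro m hm
      have hmN : m < N := Finset.mem_range.mp hm
      have hle1 : ((m:ℝ)+1)/(N:ℝ) ≤ 1 := by
        rw [div_le_one hNpos]
        exact_mod_cast Nat.succ_le_of_lt hmN
      exact dev_piece hhσ01 (by positivity) (by gcongr; linarith) hle1 (hGood m) (hprim m)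
        (fun v hv => htub m hmN σ (lt_of_lt_of_le hσ (hε₀le m hmN)) v hv)
    have hs₀self : |s₀ - s₀| < ε₀ := by simpa using hε₀
    have hGs := key s hs
    have hGs₀ := key s₀ hs₀self
    rw [hGs, hGs₀]
    set Gf : ℕ → ℝ := fun m => if hm : m < N then
        ψ m (K (s, (m:ℝ)/(N:ℝ))) - ψ m (K (s₀, (m:ℝ)/(N:ℝ))) else 0 with hGfdef
    have hptR : ∀ m (hmN : m < N), ∀ σ, |σ - s₀| < ε₀ → K (σ, ((m:ℝ)+1)/(N:ℝ)) ∈ V m := by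
      intro m hmN σ hσ
      exact htub m hmN σ (lt_of_lt_of_le hσ (hε₀le m hmN)) _ ⟨by gcongr; linarith, le_rfl⟩
    have hptL : ∀ m (hmN : m < N), ∀ σ, |σ - s₀| < ε₀ → K (σ, (m:ℝ)/(N:ℝ)) ∈ V m := by
      intro m hmN σ hσ
      exact htub m hmN σ (lt_of_lt_of_le hσ (hε₀le m hmN)) _ ⟨le_rfl, by gcongr; linarith⟩
    have hterm : ∀ m ∈ Finset.range N,
        (ψ m (K (s, ((m:ℝ)+1)/(N:ℝ))) - ψ m (K (s, (m:ℝ)/(N:ℝ))))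
        - (ψ m (K (s₀, ((m:ℝ)+1)/(N:ℝ))) - ψ m (K (s₀, (m:ℝ)/(N:ℝ))))
        = Gf (m+1) - Gf m := by
      intro m hm
      have hmN : m < N := Finset.mem_range.mp hm
      have hGfm : Gf m = ψ m (K (s, (m:ℝ)/(N:ℝ))) - ψ m (K (s₀, (m:ℝ)/(N:ℝ))) := dif_pos hmN
      rcases Nat.lt_or_ge (m+1) N with hm1 | hm1
      · have hGfm1 : Gf (m+1) = ψ (m+1) (K (s, ((m+1:ℕ):ℝ)/(N:ℝ)))
            - ψ (m+1) (K (s₀, ((m+1:ℕ):ℝ)/(N:ℝ))) := dif_pos hm1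
        have hcast : ((m+1:ℕ):ℝ) = (m:ℝ)+1 := by push_cast; ring
        rw [hcast] at hGfm1
        have hpt1R : K (s, ((m:ℝ)+1)/(N:ℝ)) ∈ V (m+1) := by
          have := hptL (m+1) hm1 s hs
          rwa [hcast] at this
        have hpt1R₀ : K (s₀, ((m:ℝ)+1)/(N:ℝ)) ∈ V (m+1) := by
          have := hptL (m+1) hm1 s₀ hs₀self
          rwa [hcast] at this
        have e := prim_diff_const (good_open (hGood m)) (good_convex (hGood m))
          (good_open (hGood (m+1))) (good_convex (hGood (m+1))) (hprim m) (hprim (m+1))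
          ⟨hptR m hmN s hs, hpt1R⟩ ⟨hptR m hmN s₀ hs₀self, hpt1R₀⟩
        rw [hGfm, hGfm1]
        linarith
      · have hGf1 : Gf (m+1) = 0 := dif_neg (by omega)
        have hmN1 : m + 1 = N := by omega
        have hcast : ((m:ℝ)+1)/(N:ℝ) = 1 := by
          rw [show (m:ℝ)+1 = ((m+1:ℕ):ℝ) by push_cast; ring, hmN1]
          field_simp
        rw [hGfm, hGf1, hcast, hend1 s, hend1 s₀]
        ring
    have htel2 : ∑ m ∈ Finset.range N, (Gf (m+1) - Gf m) = Gf N - Gf 0 :=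
      Finset.sum_range_sub Gf N
    have hGfN : Gf N = 0 := dif_neg (lt_irrefl N)
    have hGf0 : Gf 0 = 0 := by
      rw [hGfdef]
      simp only [dif_pos hN0, Nat.cast_zero, zero_div]
      rw [hend0 s, hend0 s₀]
      ring
    have := Finset.sum_congr rfl hterm
    rw [Finset.sum_sub_distrib, htel2, hGfN, hGf0] at this
    linarith
  have final := locconst_clamp zero_le_one G ?_
  · exact final
  intro u hu
  obtain ⟨ε, hε, hP⟩ := main u
  exact ⟨ε, hε, fun v _ w _ hv hw => by rw [hP v hv, hP w hw]⟩

end Poincare5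

section Poincare6
variable {ω : E3 → E3 →L[ℝ] ℝ} {Ω : Set E3}

def pγ {a b : ↥Ω} (p : Path a b) : ℝ → E3 := fun t => (p.extend t : E3)

lemma pγ_cont {a b : ↥Ω} (p : Path a b) : Continuous (pγ p) :=
  continuous_subtype_val.comp p.continuous_extend

lemma pγ_mem {a b : ↥Ω} (p : Path a b) (t : ℝ) : pγ p t ∈ Ω := (p.extend t).2

lemma pγ_le_zero {a b : ↥Ω} (p : Path a b) {t : ℝ} (ht : t ≤ 0) : pγ p t = pγ p 0 := by
  unfold pγ
  rw [Path.extend_of_le_zero p ht, Path.extend_of_le_zero p le_rfl]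

lemma pγ_dev_exists {a b : ↥Ω} (p : Path a b)
    (hloc : ∀ x ∈ Ω, ∃ U, Good ω Ω U ∧ x ∈ U) :
    ∃ h, ∀ u ∈ Icc (0:ℝ) 1, DevAt ω Ω (pγ p) h u := by
  obtain ⟨h, hh⟩ := dev_exists (pγ_cont p) (pγ_mem p) (fun u hu => pγ_le_zero p hu) hloc
  exact ⟨h, fun u hu => hh u hu.2⟩

lemma devVal_trans_inU {a b c' : ↥Ω} (p : Path a b) (q : Path b c')
    (hloc : ∀ x ∈ Ω, ∃ U, Good ω Ω U ∧ x ∈ U)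
    {U : Set E3} {φ : E3 → ℝ} (hG : Good ω Ω U) (hφ : IsPrimOn ω φ U)
    (hq : ∀ τ : unitInterval, (q τ : E3) ∈ U) :
    devVal ω Ω (pγ (p.trans q)) = devVal ω Ω (pγ p) + (φ (c' : E3) - φ (b : E3)) := by
  obtain ⟨h', hh'⟩ := pγ_dev_exists (p.trans q) hloc
  -- second half
  have hin : ∀ v ∈ Icc (1/2 : ℝ) 1, pγ (p.trans q) v ∈ U := by
    intro v hv
    have hv01 : v ∈ Icc (0:ℝ) 1 := ⟨by linarith [hv.1], hv.2⟩
    unfold pγ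
    rw [Path.extend_apply (p.trans q) hv01, Path.trans_apply]
    split_ifs with hhalf
    · have : v = 1/2 := le_antisymm hhalf hv.1
      subst this
      norm_num
      have := hq 0
      rwa [q.source] at this
    · exact hq _
  have h2 : h' 1 - h' (1/2) = φ (pγ (p.trans q) 1) - φ (pγ (p.trans q) (1/2)) :=
    dev_piece hh' (by norm_num) (by norm_num) le_rfl hG hφ hin
  have hγ1 : pγ (p.trans q) 1 = (c' : E3) := by
    unfold pγ; rw [Path.extend_one]
  have hγhalf : pγ (p.trans q) (1/2) = (b : E3) := by
    unfold pγ
    rw [Path.extend_apply (p.trans q) (by norm_num : (1/2:ℝ) ∈ Icc (0:ℝ) 1),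
      Path.trans_apply]
    split_ifs with hhalf
    · norm_num
    · norm_num at hhalf
  -- first half: rescale
  have hresc : ∀ u ∈ Icc (0:ℝ) 1, DevAt ω Ω (fun v => pγ (p.trans q) (v/2))
      (fun v => h' (v/2)) u := by
    intro u hu
    obtain ⟨U₀, φ₀, δ₀, hG₀, hφ₀, hδ₀, H₀⟩ := hh' (u/2) ⟨by linarith [hu.1], by linarith [hu.2]⟩
    refine ⟨U₀, φ₀, δ₀, hG₀, hφ₀, hδ₀, fun v hv => ?_⟩
    have : |v/2 - u/2| < δ₀ := by
      rw [show v/2 - u/2 = (v-u)/2 by ring, abs_div]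
      have := abs_lt.mp hv
      rw [abs_of_pos (by norm_num : (0:ℝ) < 2)]
      linarith [abs_nonneg (v-u), (abs_lt.mpr this : |v - u| < δ₀)]
    exact H₀ (v/2) this
  have hagree : ∀ v ∈ Icc (0:ℝ) 1, pγ (p.trans q) (v/2) = pγ p v := by
    intro v hv
    have hv2 : v/2 ∈ Icc (0:ℝ) 1 := ⟨by linarith [hv.1], by linarith [hv.2]⟩
    unfold pγ
    rw [Path.extend_apply (p.trans q) hv2, Path.trans_apply,
      Path.extend_apply p hv]
    split_ifs with hhalf
    · congr 1
      apply Subtype.ext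
      simp only
      ring
    · exfalso
      have := hv.2
      apply hhalf
      simp only
      linarith
  obtain ⟨hp, hhp⟩ := pγ_dev_exists p hloc
  have huniq := dev_unique hresc hhp hagree
  have hvp : devVal ω Ω (pγ p) = hp 1 - hp 0 := devVal_spec hhp
  have hvt : devVal ω Ω (pγ (p.trans q)) = h' 1 - h' 0 := devVal_spec hh'
  rw [hγ1, hγhalf] at h2
  have e1 : h' (1/2) - h' 0 = hp 1 - hp 0 := by
    have e2 : (1:ℝ)/2 = 1/2 := rfl
    simpa using huniq
  rw [hvp, hvt]
  linarith

end Poincare6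

section Poincare7
variable {ω : E3 → E3 →L[ℝ] ℝ} {Ω : Set E3}

lemma devVal_homotopy_invariant (hsc : SimplyConnectedSpace ↥Ω)
    (hloc : ∀ x ∈ Ω, ∃ U, Good ω Ω U ∧ x ∈ U)
    {a b : ↥Ω} (p q : Path a b) :
    devVal ω Ω (pγ p) = devVal ω Ω (pγ q) := by
  obtain ⟨F⟩ := (SimplyConnectedSpace.paths_homotopic p q : Path.Homotopic p q)
  set pI : ℝ → unitInterval := fun t => Set.projIcc 0 1 zero_le_one t with hpI
  set K : ℝ × ℝ → E3 := fun st => (F (pI st.1, pI st.2) : E3) with hK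
  have hpIc : Continuous pI := continuous_projIcc
  have hKc : Continuous K := by
    apply continuous_subtype_val.comp
    exact F.continuous.comp ((hpIc.comp continuous_fst).prodMk (hpIc.comp continuous_snd))
  have hKΩ : ∀ st : ℝ × ℝ, K st ∈ Ω := fun st => (F (pI st.1, pI st.2)).2
  have hpI0 : pI 0 = 0 := by
    rw [hpI]; simp [projIcc_left]
  have hpI1 : pI 1 = 1 := by
    rw [hpI]; simp [projIcc_right]
  have h0 : ∀ t, K (0, t) = pγ p t := by
    intro t
    rw [hK]
    simp only [hpI0]
    have : F ((0 : unitInterval), pI t) = p (pI t) := F.apply_zero (pI t)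
    rw [this]
    unfold pγ Path.extend
    show _ = ((Set.IccExtend zero_le_one p t : ↥Ω) : E3)
    rw [Set.IccExtend_apply]
    rfl
  have h1 : ∀ t, K (1, t) = pγ q t := by
    intro t
    rw [hK]
    simp only [hpI1]
    have : F ((1 : unitInterval), pI t) = q (pI t) := F.apply_one (pI t)
    rw [this]
    unfold pγ Path.extend
    show _ = ((Set.IccExtend zero_le_one q t : ↥Ω) : E3)
    rw [Set.IccExtend_apply]
    rfl
  have hclamp : ∀ s t : ℝ, t ≤ 0 → K (s, t) = K (s, 0) := by
    intro s t ht
    rw [hK]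
    simp only
    congr 2
    rw [hpI]
    simp only
    rw [projIcc_of_le_left _ ht, projIcc_left]
  have hend0 : ∀ s, K (s, 0) = K (0, 0) := by
    intro s
    rw [hK]
    simp only [hpI0]
    rw [show F (pI s, (0:unitInterval)) = a from F.source (pI s),
      show F ((0:unitInterval), (0:unitInterval)) = a from F.source 0]
  have hend1 : ∀ s, K (s, 1) = K (0, 1) := by
    intro s
    rw [hK]
    simp only [hpI1, hpI0]
    rw [show F (pI s, (1:unitInterval)) = b from F.target (pI s),
      show F ((0:unitInterval), (1:unitInterval)) = b from F.target 0]
  have hmain := devVal_homotopy hKc hKΩ hloc hclamp hend0 hend1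
  rwa [show (fun t => K (0,t)) = pγ p from funext h0,
    show (fun t => K (1,t)) = pγ q from funext h1] at hmain

theorem exists_primitive_of_good (hΩ : IsOpen Ω) (hconn : IsConnected Ω)
    (hsc : SimplyConnectedSpace ↥Ω)
    (hloc : ∀ x ∈ Ω, ∃ U, Good ω Ω U ∧ x ∈ U) :
    ∃ Φ : E3 → ℝ, ∀ x ∈ Ω, HasFDerivAt Φ (ω x) x := by
  classical
  have hpc : IsPathConnected Ω := (hΩ.isConnected_iff_isPathConnected).mp hconn
  obtain ⟨x₀, hx₀⟩ := hconn.nonempty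
  set Φ : E3 → ℝ := fun x =>
    if hx : x ∈ Ω then
      devVal ω Ω (pγ (((hpc.joinedIn x₀ hx₀ x hx).joined_subtype).somePath))
    else 0 with hΦ
  have hkey : ∀ (x : E3) (hx : x ∈ Ω) (P : Path (⟨x₀, hx₀⟩ : ↥Ω) ⟨x, hx⟩),
      Φ x = devVal ω Ω (pγ P) := by
    intro x hx P
    rw [hΦ]
    simp only [dif_pos hx]
    exact devVal_homotopy_invariant hsc hloc _ P
  refine ⟨Φ, fun x hx => ?_⟩
  obtain ⟨U, hG, hxU⟩ := hloc x hx
  obtain ⟨φ, hφ⟩ := hG.2.2.2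
  have hdiff : ∀ y (hy : y ∈ U), Φ y = φ y - φ x + Φ x := by
    intro y hy
    have hyΩ : y ∈ Ω := hG.2.2.1 hy
    set P : Path (⟨x₀, hx₀⟩ : ↥Ω) ⟨x, hx⟩ :=
      ((hpc.joinedIn x₀ hx₀ x hx).joined_subtype).somePath with hP
    -- segment path from x to y inside U
    set S : Path (⟨x, hx⟩ : ↥Ω) ⟨y, hyΩ⟩ :=
      { toFun := fun τ => ⟨(1 - (τ:ℝ)) • x + (τ:ℝ) • y,
          hG.2.2.1 (hG.2.1 hxU hy (by linarith [(τ:ℝ), unitInterval.le_one τ, unitInterval.nonneg τ] : (0:ℝ) ≤ 1 - (τ:ℝ)) (unitInterval.nonneg τ) (by ring))⟩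
        continuous_toFun := by
          apply Continuous.subtype_mk
          fun_prop
        source' := by
          apply Subtype.ext
          simp
        target' := by
          apply Subtype.ext
          simp } with hS
    have hSin : ∀ τ : unitInterval, (S τ : E3) ∈ U := by
      intro τ
      exact hG.2.1 hxU hy (by linarith [unitInterval.le_one τ] : (0:ℝ) ≤ 1 - (τ:ℝ))
        (unitInterval.nonneg τ) (by ring)
    have htr := devVal_trans_inU P S hloc hG hφ hSin
    have h1 := hkey y hyΩ (P.trans S)
    have h2 := hkey x hx P
    rw [h1, htr, ← h2]
    simp only
    ring
  have heq : Φ =ᶠ[nhds x] fun y => φ y + (Φ x - φ x) := by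
    filter_upwards [hG.1.mem_nhds hxU] with y hy
    rw [hdiff y hy]; ring
  exact ((hφ x hxU).add_const (Φ x - φ x)).congr_of_eventuallyEq heq

end Poincare7

section LocalPrim
variable {Ω : Set E3}

def ωQ (Qv : E3 → Fin 3 → ℝ) : E3 → E3 →L[ℝ] ℝ :=
  fun y => ∑ k, Qv y k • ContinuousLinearMap.proj k

lemma ωQ_apply (Qv : E3 → Fin 3 → ℝ) (y : E3) (v : E3) :
    ωQ Qv y v = ∑ k, Qv y k * v k := by
  simp [ωQ, ContinuousLinearMap.sum_apply]

lemma local_primitive (hΩ : IsOpen Ω) {Qv : E3 → Fin 3 → ℝ}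
    (hQv : ∀ k, ContDiffOn ℝ (⊤:ℕ∞) (fun x => Qv x k) Ω)
    (hclosed : ∀ x ∈ Ω, ∀ i j : Fin 3, pd (fun y => Qv y j) i x = pd (fun y => Qv y i) j x)
    {c : E3} (hc : c ∈ Ω) : ∃ U, Good (ωQ Qv) Ω U ∧ c ∈ U := by
  obtain ⟨r, hr, hballΩ⟩ : ∃ r > 0, closedBall c r ⊆ Ω := by
    obtain ⟨r, hr, h⟩ := (Metric.nhds_basis_closedBall.mem_iff).mp (hΩ.mem_nhds hc)
    exact ⟨r, hr, h⟩
  refine ⟨ball c r, ⟨isOpen_ball, convex_ball c r,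
    ball_subset_closedBall.trans hballΩ, ?_⟩, mem_ball_self hr⟩
  set p : E3 → ℝ → E3 := fun x t => c + t • (x - c) with hp
  have hpmem : ∀ x ∈ closedBall c r, ∀ t ∈ Icc (0:ℝ) 1, p x t ∈ closedBall c r := by
    intro x hx t ht
    rw [mem_closedBall, dist_eq_norm]
    have : c + t • (x - c) - c = t • (x - c) := by abel
    rw [hp]
    simp only
    rw [this, norm_smul]
    rw [mem_closedBall, dist_eq_norm] at hx
    calc ‖t‖ * ‖x - c‖ ≤ 1 * ‖x - c‖ := by
          apply mul_le_mul_of_nonneg_right _ (norm_nonneg _)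
          rw [Real.norm_eq_abs, abs_of_nonneg ht.1]
          exact ht.2
      _ ≤ r := by rw [one_mul]; exact hx
  have hpΩ : ∀ x ∈ closedBall c r, ∀ t ∈ Icc (0:ℝ) 1, p x t ∈ Ω :=
    fun x hx t ht => hballΩ (hpmem x hx t ht)
  set D : Fin 3 → E3 → E3 →L[ℝ] ℝ := fun k y => fderiv ℝ (fun z => Qv z k) y with hD
  have hQdiff : ∀ (k : Fin 3), ∀ y ∈ Ω, HasFDerivAt (fun z => Qv z k) (D k y) y :=
    fun k y hy => (diffAt_of_smOn hΩ (hQv k) hy).hasFDerivAt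
  have hDcont : ∀ k, ContinuousOn (D k) Ω :=
    fun k => (hQv k).continuousOn_fderiv_of_isOpen hΩ (by exact_mod_cast le_top)
  set F : E3 → ℝ → ℝ := fun x t => ∑ k, Qv (p x t) k * (x k - c k) with hF
  set F' : E3 → ℝ → E3 →L[ℝ] ℝ := fun x t =>
    ∑ k, (Qv (p x t) k • ContinuousLinearMap.proj k + (x k - c k) • (t • D k (p x t))) with hF'
  have hpc : Continuous (fun q : E3 × ℝ => p q.1 q.2) := by
    rw [hp]; fun_prop
  set S : Set (E3 × ℝ) := closedBall c r ×ˢ Icc (0:ℝ) 1 with hS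
  have hmaps : MapsTo (fun q : E3 × ℝ => p q.1 q.2) S Ω :=
    fun q hq => hpΩ q.1 hq.1 q.2 hq.2
  have hQpc : ∀ k, ContinuousOn (fun q : E3 × ℝ => Qv (p q.1 q.2) k) S :=
    fun k => ((hQv k).continuousOn).comp hpc.continuousOn hmaps
  have hFc : ContinuousOn (fun q : E3 × ℝ => F q.1 q.2) S := by
    rw [hF]
    apply continuousOn_finset_sum
    intro k _
    exact (hQpc k).mul (((continuous_apply k).comp continuous_fst).sub continuous_const).continuousOn
  have hF'c : ContinuousOn (fun q : E3 × ℝ => F' q.1 q.2) S := by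
    rw [hF']
    apply continuousOn_finset_sum
    intro k _
    apply ContinuousOn.add
    · exact (hQpc k).smul continuousOn_const
    · exact ((((continuous_apply k).comp continuous_fst).sub continuous_const).continuousOn).smul
        ((continuous_snd.continuousOn).smul (((hDcont k)).comp hpc.continuousOn hmaps))
  have hdx : ∀ t ∈ Icc (0:ℝ) 1, ∀ x ∈ ball c r, HasFDerivAt (fun y => F y t) (F' x t) x := by
    intro t ht x hx
    rw [hF, hF']
    apply HasFDerivAt.fun_sum
    intro k _
    have hin : HasFDerivAt (fun y => p y t) (t • ContinuousLinearMap.id ℝ E3) x := by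
      have h1 : HasFDerivAt (fun y : E3 => y - c) (ContinuousLinearMap.id ℝ E3) x :=
        (hasFDerivAt_id x).sub_const c
      have h2 := (h1.const_smul t).const_add c
      rw [hp]
      exact h2
    have hpmemx : p x t ∈ Ω := hpΩ x (ball_subset_closedBall hx) t ht
    have hq : HasFDerivAt (fun y => Qv (p y t) k)
        ((D k (p x t)).comp (t • ContinuousLinearMap.id ℝ E3)) x :=
      by have := (hQdiff k _ hpmemx).comp x hin; exact this
    have hcomp_eq : (D k (p x t)).comp (t • ContinuousLinearMap.id ℝ E3) = t • D k (p x t) := by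
      ext v; simp
    rw [hcomp_eq] at hq
    have hcoord : HasFDerivAt (fun y : E3 => y k - c k)
        (ContinuousLinearMap.proj k : E3 →L[ℝ] ℝ) x := by
      have hcd := ((ContinuousLinearMap.proj k : E3 →L[ℝ] ℝ).hasFDerivAt (x := x)).sub_const (c k)
      exact hcd
    exact hq.mul hcoord
  refine ⟨fun x => ∫ t in (0:ℝ)..1, F x t, fun x₀ hx₀ => ?_⟩
  set ε := (r - dist x₀ c)/2 with hε
  have hεpos : 0 < ε := by
    rw [hε]
    rw [mem_ball] at hx₀
    linarith
  have hcb_sub : closedBall x₀ ε ⊆ closedBall c r := by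
    intro y hy
    rw [mem_closedBall] at hy ⊢
    calc dist y c ≤ dist y x₀ + dist x₀ c := dist_triangle _ _ _
      _ ≤ ε + dist x₀ c := by linarith
      _ ≤ r := by rw [hε]; linarith
  have hb_sub : ball x₀ ε ⊆ ball c r := by
    intro y hy
    rw [mem_ball] at hy ⊢
    calc dist y c ≤ dist y x₀ + dist x₀ c := dist_triangle _ _ _
      _ < ε + dist x₀ c := by linarith
      _ ≤ r := by rw [hε]; linarith [dist_nonneg (x := x₀) (y := c)]
  have hcontF : ∀ x ∈ closedBall c r, ContinuousOn (F x) (Icc (0:ℝ) 1) := by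
    intro x hx
    have : ContinuousOn (fun t => (fun q : E3 × ℝ => F q.1 q.2) (x, t)) (Icc (0:ℝ) 1) := by
      apply hFc.comp (Continuous.prodMk_right x).continuousOn
      intro t ht
      exact ⟨hx, ht⟩
    exact this
  have hcontF' : ContinuousOn (F' x₀) (Icc (0:ℝ) 1) := by
    have : ContinuousOn (fun t => (fun q : E3 × ℝ => F' q.1 q.2) (x₀, t)) (Icc (0:ℝ) 1) := by
      apply hF'c.comp (Continuous.prodMk_right x₀).continuousOn
      intro t ht
      exact ⟨ball_subset_closedBall hx₀, ht⟩
    exact this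
  have hIoc : Ι (0:ℝ) 1 = Ioc (0:ℝ) 1 := uIoc_of_le zero_le_one
  have hFmeas : ∀ᶠ x in nhds x₀, MeasureTheory.AEStronglyMeasurable (F x)
      (MeasureTheory.volume.restrict (Ι (0:ℝ) 1)) := by
    filter_upwards [isOpen_ball.mem_nhds hx₀] with y hy
    rw [hIoc]
    exact ((hcontF y (ball_subset_closedBall hy)).mono Ioc_subset_Icc_self).aestronglyMeasurable
      measurableSet_Ioc
  have hFint : IntervalIntegrable (F x₀) MeasureTheory.volume 0 1 := by
    apply ContinuousOn.intervalIntegrable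
    rw [uIcc_of_le zero_le_one]
    exact hcontF x₀ (ball_subset_closedBall hx₀)
  have hF'meas : MeasureTheory.AEStronglyMeasurable (F' x₀)
      (MeasureTheory.volume.restrict (Ι (0:ℝ) 1)) := by
    rw [hIoc]
    exact (hcontF'.mono Ioc_subset_Icc_self).aestronglyMeasurable measurableSet_Ioc
  obtain ⟨M, hM⟩ := ((isCompact_closedBall x₀ ε).prod isCompact_Icc).exists_bound_of_continuousOn
    (hF'c.mono (fun q hq => ⟨hcb_sub hq.1, hq.2⟩))
  have hbound : ∀ᵐ t ∂(MeasureTheory.volume.restrict (Ι (0:ℝ) 1)),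
      ∀ x ∈ ball x₀ ε, ‖F' x t‖ ≤ M := by
    rw [hIoc]
    apply MeasureTheory.ae_restrict_of_forall_mem measurableSet_Ioc
    intro t ht x hx
    exact hM (x, t) ⟨ball_subset_closedBall hx, Ioc_subset_Icc_self ht⟩
  have hdiff : ∀ᵐ t ∂(MeasureTheory.volume.restrict (Ι (0:ℝ) 1)),
      ∀ x ∈ ball x₀ ε, HasFDerivAt (F · t) (F' x t) x := by
    rw [hIoc]
    apply MeasureTheory.ae_restrict_of_forall_mem measurableSet_Ioc
    intro t ht x hx
    exact hdx t (Ioc_subset_Icc_self ht) x (hb_sub hx)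
  have hMain := hasFDerivAt_integral_of_dominated_of_fderiv_le'' (ball_mem_nhds x₀ hεpos)
    hFmeas hFint hF'meas hbound intervalIntegrable_const hdiff
  have hx₀cb : x₀ ∈ closedBall c r := ball_subset_closedBall hx₀
  have hpx₀Ω : ∀ t ∈ Icc (0:ℝ) 1, p x₀ t ∈ Ω := fun t ht => hpΩ x₀ hx₀cb t ht
  have hintF' : MeasureTheory.IntegrableOn (F' x₀) (Ioc (0:ℝ) 1) :=
    (hcontF'.integrableOn_compact isCompact_Icc).mono_set Ioc_subset_Icc_self
  have hpx₀c : Continuous (fun t => p x₀ t) := hpc.comp (Continuous.prodMk_right x₀)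
  set g' : Fin 3 → ℝ → ℝ := fun k t => Qv (p x₀ t) k + t * (D k (p x₀ t)) (x₀ - c) with hg'
  have hcont_g' : ∀ k, ContinuousOn (g' k) (Icc (0:ℝ) 1) := by
    intro k
    rw [hg']
    apply ContinuousOn.add
    · exact ((hQv k).continuousOn).comp hpx₀c.continuousOn (fun t ht => hpx₀Ω t ht)
    · apply (continuous_id.continuousOn).mul
      exact ((ContinuousLinearMap.apply ℝ ℝ (x₀ - c)).continuous.comp_continuousOn
        (((hDcont k)).comp hpx₀c.continuousOn (fun t ht => hpx₀Ω t ht)))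
  have hint_g' : ∀ k, IntervalIntegrable (g' k) MeasureTheory.volume 0 1 := by
    intro k
    apply ContinuousOn.intervalIntegrable
    rw [uIcc_of_le zero_le_one]
    exact hcont_g' k
  have hDexp : ∀ (k : Fin 3) (y : E3), y ∈ Ω → ∀ w : E3,
      D k y w = ∑ j, w j * pd (fun z => Qv z k) j y := by
    intro k y _ w
    have hw : ∑ j, w j • (Pi.single j 1 : E3) = w := by
      have : ∀ j, w j • (Pi.single j 1 : E3) = Pi.single j (w j) := by
        intro j
        ext m
        by_cases hjm : m = j
        · subst hjm; simp
        · simp [Pi.single_apply, hjm]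
      simp only [this]
      exact Finset.univ_sum_single w
    conv_lhs => rw [← hw]
    rw [map_sum]
    apply Finset.sum_congr rfl
    intro j _
    rw [map_smul, smul_eq_mul]
    rfl
  have hFTC : ∀ k : Fin 3, ∫ t in (0:ℝ)..1, g' k t = Qv x₀ k := by
    intro k
    have hder : ∀ t ∈ uIcc (0:ℝ) 1, HasDerivAt (fun τ => τ * Qv (p x₀ τ) k) (g' k t) t := by
      intro t ht
      rw [uIcc_of_le zero_le_one] at ht
      have hyΩ := hpx₀Ω t ht
      have hp' : HasDerivAt (fun τ : ℝ => p x₀ τ) (x₀ - c) t := by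
        have h1 : HasDerivAt (fun τ : ℝ => τ • (x₀ - c)) ((1:ℝ) • (x₀ - c)) t :=
          (hasDerivAt_id t).smul_const (x₀ - c)
        rw [one_smul] at h1
        have h2 := h1.const_add c
        rw [hp]
        exact h2
      have hq : HasDerivAt (fun τ => Qv (p x₀ τ) k) ((D k (p x₀ t)) (x₀ - c)) t :=
        (hQdiff k _ hyΩ).comp_hasDerivAt t hp'
      have h3 : HasDerivAt (fun τ => τ * Qv (p x₀ τ) k) _ t := (hasDerivAt_id t).mul hq
      rw [hg']
      simpa using h3
    rw [intervalIntegral.integral_eq_sub_of_hasDerivAt hder (hint_g' k)]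
    have hp1 : p x₀ 1 = x₀ := by rw [hp]; simp
    rw [hp1]
    ring
  have hkey : (∫ t in (0:ℝ)..1, F' x₀ t) = ωQ Qv x₀ := by
    apply ContinuousLinearMap.ext
    intro v
    rw [intervalIntegral.integral_of_le zero_le_one,
      ContinuousLinearMap.integral_apply hintF',
      ← intervalIntegral.integral_of_le zero_le_one]
    have hptw : ∀ t ∈ Icc (0:ℝ) 1, (F' x₀ t) v = ∑ k, v k * g' k t := by
      intro t ht
      have hyΩ := hpx₀Ω t ht
      have hD1 : ∀ (k : Fin 3) (w : E3), D k (p x₀ t) w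
          = ∑ j, w j * pd (fun z => Qv z k) j (p x₀ t) :=
        fun k w => hDexp k _ hyΩ w
      have hcl : ∀ i j : Fin 3, pd (fun y => Qv y j) i (p x₀ t)
          = pd (fun y => Qv y i) j (p x₀ t) := fun i j => hclosed _ hyΩ i j
      rw [hF', hg']
      simp only [ContinuousLinearMap.sum_apply, ContinuousLinearMap.add_apply,
        ContinuousLinearMap.smul_apply, ContinuousLinearMap.proj_apply, smul_eq_mul]
      simp only [hD1]
      simp only [Fin.sum_univ_three]
      rw [hcl 0 1, hcl 0 2, hcl 1 2]
      simp only [Pi.sub_apply]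
      ring
    calc ∫ t in (0:ℝ)..1, (F' x₀ t) v
        = ∫ t in (0:ℝ)..1, ∑ k, v k * g' k t := by
          apply intervalIntegral.integral_congr
          intro t ht
          rw [uIcc_of_le zero_le_one] at ht
          exact hptw t ht
      _ = ∑ k, ∫ t in (0:ℝ)..1, v k * g' k t :=
          intervalIntegral.integral_finset_sum (fun k _ => (hint_g' k).const_mul (v k))
      _ = ∑ k, v k * Qv x₀ k := by
          apply Finset.sum_congr rfl
          intro k _
          rw [intervalIntegral.integral_const_mul, hFTC k]
      _ = ωQ Qv x₀ v := by
          rw [ωQ_apply]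
          apply Finset.sum_congr rfl
          intro k _
          ring
  rw [hkey] at hMain
  exact hMain
end LocalPrim


/-- Semi-metric geometry with vanishing rotational disclinations: assuming
`θ = 0`, the symmetric part `ζ` of the lowered curvature vanishes identically
iff the Weyl covector is a gradient. -/
theorem semi_metric_zeta_zero_iff_exact (Ω : Set E3) (hΩ : IsOpen Ω) (hne : Ω.Nonempty)
    (hconn : IsConnected Ω) (hsc : SimplyConnectedSpace Ω)
    (L : Conn) (hL : ConnSmooth L Ω) (g : Metric) (hg : MetricOn g Ω)
    (Qv : E3 → Fin 3 → ℝ) (hQv : ∀ k, ContDiffOn ℝ (⊤ : ℕ∞) (fun x => Qv x k) Ω)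
    (hsemi : ∀ x ∈ Ω, ∀ k i j : Fin 3, nm L g x k i j = Qv x k * g x i j)
    (htheta : ∀ x ∈ Ω, ∀ i j k l : Fin 3, lcurv L g x i j k l = lcurv L g x i j l k) :
    (∀ x ∈ Ω, ∀ i j k l : Fin 3, lcurv L g x i j k l + lcurv L g x i j l k = 0)
      ↔ ∃ φ : E3 → ℝ, ContDiffOn ℝ (⊤ : ℕ∞) φ Ω ∧
          ∀ x ∈ Ω, ∀ k : Fin 3, Qv x k = pd φ k x := by
  obtain ⟨hgsm, hgsymm, hgpos⟩ := hg
  constructor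
  · intro hζ
    have hclosed : ∀ x ∈ Ω, ∀ i j : Fin 3,
        pd (fun y => Qv y j) i x = pd (fun y => Qv y i) j x := by
      intro x hx i j
      have hz := zeta_eq L g hΩ hL hgsm Qv hQv hsemi hx (hgsymm x hx) i j 0 0
      have h0 := hζ x hx i j 0 0
      rw [hz] at h0
      have hgpos00 : 0 < g x 0 0 := by
        exact (hgpos x hx).diag_pos
      have := (mul_eq_zero.mp h0).resolve_right (ne_of_gt hgpos00)
      linarith
    have hloc : ∀ x ∈ Ω, ∃ U, Good (ωQ Qv) Ω U ∧ x ∈ U :=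
      fun x hx => local_primitive hΩ hQv hclosed hx
    obtain ⟨Φ, hΦ⟩ := exists_primitive_of_good hΩ hconn hsc hloc
    refine ⟨Φ, ?_, ?_⟩
    · apply (contDiffOn_infty_iff_fderiv_of_isOpen hΩ).mpr
      constructor
      · exact fun y hy => ((hΦ y hy).differentiableAt).differentiableWithinAt
      · apply ContDiffOn.congr (f := ωQ Qv)
        · apply ContDiffOn.sum
          intro k _
          exact ContDiffOn.smul (hQv k) contDiffOn_const
        · exact fun y hy => (hΦ y hy).fderiv
    · intro x hx k
      rw [pd, (hΦ x hx).fderiv, ωQ_apply]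
      simp [Pi.single_apply]
  · rintro ⟨φ, hφsm, hφ⟩ x hx i j k l
    have hsymm' : pd (fun y => Qv y j) i x = pd (fun y => Qv y i) j x := by
      have h1 : pd (fun y => Qv y j) i x = pd (pd φ j) i x :=
        pd_congr hΩ hx (fun y hy => hφ y hy j) i
      have h2 : pd (fun y => Qv y i) j x = pd (pd φ i) j x :=
        pd_congr hΩ hx (fun y hy => hφ y hy i) j
      rw [h1, h2, pd_comm hΩ hφsm hx]
    rw [zeta_eq L g hΩ hL hgsm Qv hQv hsemi hx (hgsymm x hx) i j k l, hsymm']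
    ring
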